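/- Let v be subharmonic on a rectangle P ⊂ ℝ², bounded above on P by a measurable majorant M̃(y) depending only on the second coordinate, and let F(t) = λ₁({y : M̃(y) ≥ t}) (one-dimensional Lebesgue measure). Suppose z ∈ P satisfies v(z) ≥ 𝒞 for some 𝒞 > 0 and d(z, ∂P) > (8/π) F(𝒞/2). Then there exists ζ ∈ P with |z − ζ| ≤ (8/π) F(𝒞/2) and v(ζ) ≥ 2𝒞. -/

import Mathlib

open MeasureTheory

/-- The open rectangle `(-a,a) × (-b,b)` viewed as a subset of `ℂ`. -/
def Rect (a b : ℝ) : Set ℂ := {z | |z.re| < a ∧ |z.im| < b}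

/-- A function is subharmonic on `s` if it is upper semicontinuous on `s` and satisfies
the sub-mean-value inequality on closed disks contained in `s`. -/
def SubharmonicOn (v : ℂ → ℝ) (s : Set ℂ) : Prop :=
  UpperSemicontinuousOn v s ∧
    ∀ z r, 0 < r → Metric.closedBall z r ⊆ s →
      v z ≤ ⨍ w in Metric.closedBall z r, v w

lemma volume_reProdIm_aux (s t : Set ℝ) (hs : MeasurableSet s) (ht : MeasurableSet t) :
    volume (s ×ℂ t) = volume s * volume t := by
  have h1 : s ×ℂ t = Complex.measurableEquivRealProd ⁻¹' (s ×ˢ t) := by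
    ext w
    simp [Complex.mem_reProdIm, Complex.measurableEquivRealProd_apply, Set.mem_prod]
  rw [h1, Complex.volume_preserving_equiv_real_prod.measure_preimage
    ((hs.prod ht).nullMeasurableSet)]
  rw [← Measure.prod_prod, ← Measure.volume_eq_prod]

/-- The doubling proposition in Domar's argument: if `v(z) ≥ 𝒞` and
`d(z, ∂P) > (8/π) F(𝒞/2)`, where `F(t) = λ₁{y : M̃(y) ≥ t}`, then there is `ζ ∈ P` with
`|z - ζ| ≤ (8/π) F(𝒞/2)` and `v(ζ) ≥ 2𝒞`. -/
theorem stmt2 (a b : ℝ) (ha : 0 < a) (hb : 0 < b) (v : ℂ → ℝ) (Mt : ℝ → ℝ)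
    (hMmeas : Measurable Mt)
    (hv : SubharmonicOn v (Rect a b))
    (hbd : ∀ w ∈ Rect a b, v w ≤ Mt w.im)
    (F : ℝ → ℝ)
    (hF : ∀ t, F t = (volume {y | y ∈ Set.Ioo (-b) b ∧ t ≤ Mt y}).toReal)
    (z : ℂ) (hz : z ∈ Rect a b) (C : ℝ) (hC : 0 < C) (hvz : C ≤ v z)
    (hd : 8 / Real.pi * F (C / 2) < Metric.infDist z (Rect a b)ᶜ) :
    ∃ ζ ∈ Rect a b, dist z ζ ≤ 8 / Real.pi * F (C / 2) ∧ 2 * C ≤ v ζ := by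
  by_contra hcon
  push_neg at hcon
  have hπ : (0:ℝ) < Real.pi := Real.pi_pos
  have hFnn : 0 ≤ F (C/2) := by rw [hF]; exact ENNReal.toReal_nonneg
  set r : ℝ := 8 / Real.pi * F (C/2) with hrdef
  have hr0 : 0 ≤ r := by positivity
  set dd := Metric.infDist z (Rect a b)ᶜ with hdd
  have hdd0 : 0 < dd := lt_of_le_of_lt hr0 hd
  set s : ℝ := if F (C/2) = 0 then dd / 2 else r with hsdef
  have hs0 : 0 < s := by
    rw [hsdef]; split_ifs with hF0
    · linarith
    · have : 0 < F (C/2) := lt_of_le_of_ne hFnn (Ne.symm hF0)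
      positivity
  have hslt : s < dd := by
    rw [hsdef]; split_ifs with hF0
    · linarith
    · exact hd
  have hsF : F (C/2) ≤ Real.pi * s / 8 := by
    rw [hsdef]; split_ifs with hF0
    · rw [hF0]; positivity
    · rw [hrdef]; field_simp; norm_num
  set B := Metric.closedBall z s with hBdef
  have hsub : B ⊆ Rect a b := by
    intro w hw
    by_contra hwmem
    have h1 : dd ≤ dist z w := Metric.infDist_le_dist_of_mem hwmem
    have h2 : dist w z ≤ s := Metric.mem_closedBall.1 hw
    rw [dist_comm] at h1
    linarith
  have hκ : (volume B).toReal = Real.pi * s ^ 2 := by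
    rw [hBdef, Complex.volume_closedBall]
    rw [ENNReal.toReal_mul, ENNReal.toReal_pow, ENNReal.toReal_ofReal hs0.le]
    simp [Real.coe_toNNReal _ hπ.le]
    ring
  have hκpos : 0 < (volume B).toReal := by rw [hκ]; positivity
  have hBfin : volume B ≠ ⊤ := (MeasureTheory.measure_closedBall_lt_top).ne
  set T : Set ℝ := {y | y ∈ Set.Ioo (-b) b ∧ C/2 ≤ Mt y} with hTdef
  have hTmeas : MeasurableSet T :=
    measurableSet_Ioo.inter (measurableSet_le measurable_const hMmeas)
  have hTvol : volume T = ENNReal.ofReal (F (C/2)) := by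
    rw [hF, ENNReal.ofReal_toReal]
    refine ((measure_mono (fun y hy => hy.1)).trans_lt ?_).ne
    rw [Real.volume_Ioo]
    exact ENNReal.ofReal_lt_top
  set S : Set ℂ := Set.Icc (z.re - s) (z.re + s) ×ℂ T with hSdef
  have hSmeas : MeasurableSet S :=
    (measurableSet_Icc.preimage Complex.measurable_re).inter
      (hTmeas.preimage Complex.measurable_im)
  have hSvol : volume S = ENNReal.ofReal (2*s) * ENNReal.ofReal (F (C/2)) := by
    rw [hSdef, volume_reProdIm_aux _ _ measurableSet_Icc hTmeas, Real.volume_Icc, hTvol]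
    congr 1
    ring_nf
  have hBSfin : volume (B ∩ S) ≠ ⊤ :=
    ((measure_mono Set.inter_subset_left).trans_lt hBfin.lt_top).ne
  have hm1 : (volume (B ∩ S)).toReal ≤ Real.pi * s ^ 2 / 4 := by
    have h1 : volume (B ∩ S) ≤ ENNReal.ofReal (2*s) * ENNReal.ofReal (F (C/2)) := by
      rw [← hSvol]; exact measure_mono Set.inter_subset_right
    have h2 := ENNReal.toReal_mono (by finiteness) h1
    rw [← ENNReal.ofReal_mul (by positivity)] at h2
    rw [ENNReal.toReal_ofReal (by positivity)] at h2
    nlinarith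
  -- membership in S for points of B where v ≥ C/2
  have hmemS : ∀ w ∈ B, C/2 ≤ v w → w ∈ S := by
    intro w hw hvw
    have hwR : w ∈ Rect a b := hsub hw
    have hd2 : ‖w - z‖ ≤ s := by
      rw [← Complex.dist_eq]; exact Metric.mem_closedBall.1 hw
    have hre : |w.re - z.re| ≤ s := by
      have h3 := Complex.abs_re_le_norm (w - z)
      simp only [Complex.sub_re] at h3
      linarith
    rcases abs_le.1 hre with ⟨h1, h2⟩
    refine ⟨?_, ?_⟩
    · simp only [Set.mem_preimage, Set.mem_Icc]
      constructor <;> linarith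
    · simp only [Set.mem_preimage]
      exact ⟨⟨neg_lt_of_abs_lt hwR.2, lt_of_abs_lt hwR.2⟩, hvw.trans (hbd w hwR)⟩
  -- sub-mean value inequality
  have hmean := hv.2 z s hs0 hsub
  rw [setAverage_eq, smul_eq_mul] at hmean
  by_cases hInt : IntegrableOn v B volume
  · set h : ℂ → ℝ := fun w => max (v w) (C/2) with hhdef
    have hhInt : IntegrableOn h B volume := by
      have hconst : IntegrableOn (fun _ : ℂ => C/2) B volume :=
        integrableOn_const hBfin
      exact hInt.sup hconst
    have hvh : ∫ w in B, v w ≤ ∫ w in B, h w :=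
      setIntegral_mono hInt hhInt (fun w => le_max_left _ _)
    have hsplit := integral_inter_add_diff (f := h) (s := B) hSmeas hhInt
    have hI2 : ∫ w in B \ S, h w = (volume (B \ S)).toReal * (C/2) := by
      rw [setIntegral_congr_fun (Metric.isClosed_closedBall.measurableSet.diff hSmeas)
        (g := fun _ => C/2) ?_, setIntegral_const, smul_eq_mul, measureReal_def]
      intro w hw
      have : ¬ (C/2 ≤ v w) := fun hc => hw.2 (hmemS w hw.1 hc)
      simp only [hhdef]
      exact max_eq_right (le_of_not_ge this)
    have hI1 : ∫ w in B ∩ S, h w ≤ 2 * C * (volume (B ∩ S)).toReal := by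
      by_cases hF0 : F (C/2) = 0
      · have hnull : volume (B ∩ S) = 0 := by
          have h1 : volume (B ∩ S) ≤ ENNReal.ofReal (2*s) * ENNReal.ofReal (F (C/2)) := by
            rw [← hSvol]; exact measure_mono Set.inter_subset_right
          rw [hF0] at h1
          simpa using h1
        rw [Measure.restrict_eq_zero.2 hnull, integral_zero_measure, hnull]
        simp
      · have hsr : s = r := by rw [hsdef, if_neg hF0]
        have hle : ∀ w ∈ B ∩ S, h w ≤ 2 * C := by
          intro w hw
          have hwR : w ∈ Rect a b := hsub hw.1
          have hdist : dist z w ≤ r := by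
            rw [dist_comm, ← hsr]; exact Metric.mem_closedBall.1 hw.1
          have hv2C : v w < 2 * C := hcon w hwR hdist
          simp only [hhdef]
          exact max_le hv2C.le (by linarith)
        calc ∫ w in B ∩ S, h w ≤ ∫ _ in B ∩ S, 2 * C :=
              setIntegral_mono_on (hhInt.mono_set Set.inter_subset_left)
                (integrableOn_const hBSfin)
                (Metric.isClosed_closedBall.measurableSet.inter hSmeas) hle
          _ = 2 * C * (volume (B ∩ S)).toReal := by
              rw [setIntegral_const, smul_eq_mul, measureReal_def]; ring
    have hsum : volume (B ∩ S) + volume (B \ S) = volume B := measure_inter_add_diff B hSmeas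
    have hBdSfin : volume (B \ S) ≠ ⊤ :=
      ((measure_mono Set.diff_subset).trans_lt hBfin.lt_top).ne
    have hsumR : (volume (B ∩ S)).toReal + (volume (B \ S)).toReal = (volume B).toReal := by
      rw [← ENNReal.toReal_add hBSfin hBdSfin, hsum]
    have hm2nn : 0 ≤ (volume (B \ S)).toReal := ENNReal.toReal_nonneg
    have hm1nn : 0 ≤ (volume (B ∩ S)).toReal := ENNReal.toReal_nonneg
    -- assemble
    have hm2eq : (volume (B \ S)).toReal = (volume B).toReal - (volume (B ∩ S)).toReal := by
      linarith
    have hm1' : (volume (B ∩ S)).toReal ≤ (volume B).toReal / 4 := by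
      rw [hκ]; linarith
    have key : 3*C/2 * (volume (B ∩ S)).toReal ≤ 3*C/2 * ((volume B).toReal/4) :=
      mul_le_mul_of_nonneg_left hm1' (by linarith)
    have hI2' : ∫ w in B \ S, h w
        = ((volume B).toReal - (volume (B ∩ S)).toReal) * (C/2) := by
      rw [hI2, hm2eq]
    have hbound : ∫ w in B, v w ≤ 7 * C / 8 * (volume B).toReal := by
      nlinarith [hvh, hsplit, hI1, hI2', key]
    have hfinal : C ≤ 7 * C / 8 := by
      calc C ≤ v z := hvz
        _ ≤ (volume B).toReal⁻¹ * ∫ w in B, v w := hmean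
        _ ≤ (volume B).toReal⁻¹ * (7 * C / 8 * (volume B).toReal) := by
            apply mul_le_mul_of_nonneg_left hbound (inv_nonneg.2 hκpos.le)
        _ = 7 * C / 8 := by field_simp
    linarith
  · rw [integral_undef hInt] at hmean
    simp at hmean
    linarith
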